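/- Let (G,G') be a pair that admits a representation and satisfies (P2), and let e ∈ E(G') be contractible. Then the contracted pair (G,G')/e satisfies (P2). -/

import Mathlib

open SimpleGraph

namespace ENPT

variable {β V W U : Type}

/-- A graph on a subset of `β`, modeled as a subgraph of the complete graph on `β`. -/
abbrev SubG (β : Type) := SimpleGraph.Subgraph (⊤ : SimpleGraph β)

/-- `H` is a path: connected, with at least one edge, and maximum degree 2. -/
def IsPathSub (H : SubG β) : Prop :=
  H.Connected ∧ H.edgeSet.Nonempty ∧ ∀ v : β, (H.neighborSet v).ncard ≤ 2

/-- The split vertices of two subgraphs: vertices of degree at least 3 in their union. -/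
def Split (P Q : SubG β) : Set β := {v | 3 ≤ ((P ⊔ Q).neighborSet v).ncard}

/-- Two subgraphs edge-intersect. -/
def EdgeInt (P Q : SubG β) : Prop := (P.edgeSet ∩ Q.edgeSet).Nonempty

lemma EdgeInt.symm {P Q : SubG β} (h : EdgeInt P Q) : EdgeInt Q P := by
  unfold EdgeInt at h ⊢; rwa [Set.inter_comm]

lemma Split_comm (P Q : SubG β) : Split P Q = Split Q P := by
  unfold Split; rw [sup_comm]

/-- `P ∼ Q` : edge-intersecting and non-splitting. -/
def NonSplit (P Q : SubG β) : Prop := EdgeInt P Q ∧ Split P Q = ∅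

lemma NonSplit.symm {P Q : SubG β} (h : NonSplit P Q) : NonSplit Q P :=
  ⟨h.1.symm, by rw [Split_comm]; exact h.2⟩

/-- The EPT graph of a family of paths. -/
def EPTg (Ps : V → SubG β) : SimpleGraph V where
  Adj u v := u ≠ v ∧ EdgeInt (Ps u) (Ps v)
  symm := ⟨fun u v h => ⟨Ne.symm h.1, h.2.symm⟩⟩
  loopless := ⟨fun u h => h.1 rfl⟩

/-- The ENPT graph of a family of paths. -/
def ENPTg (Ps : V → SubG β) : SimpleGraph V where
  Adj u v := u ≠ v ∧ NonSplit (Ps u) (Ps v)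
  symm := ⟨fun u v h => ⟨Ne.symm h.1, h.2.symm⟩⟩
  loopless := ⟨fun u h => h.1 rfl⟩

/-- `⟨T, Ps⟩` is a representation of the pair `(G, G')`. -/
structure IsRep (T : SubG β) (Ps : V → SubG β) (G G' : SimpleGraph V) : Prop where
  tree : T.coe.IsTree
  sub : ∀ v, Ps v ≤ T
  path : ∀ v, IsPathSub (Ps v)
  ept : EPTg Ps = G
  enpt : ENPTg Ps = G'

/-- Property (P3) of a representation: no red edge-clique of size 3. -/
def SatP3 (Ps : V → SubG β) : Prop :=
  ¬ ∃ (e : Sym2 β) (p q r : V), p ≠ q ∧ p ≠ r ∧ q ≠ r ∧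
    e ∈ (Ps p).edgeSet ∧ e ∈ (Ps q).edgeSet ∧ e ∈ (Ps r).edgeSet ∧
    (Split (Ps p) (Ps q)).Nonempty ∧ (Split (Ps p) (Ps r)).Nonempty ∧
    (Split (Ps q) (Ps r)).Nonempty

/-- The map merging `q` into `p`. -/
def mergeMap [DecidableEq V] (p q : V) : V → V := fun x => if x = q then p else x

/-- The image of a subgraph under the merge of `b` into `a` (contraction of `{a,b}`). -/
def cImage [DecidableEq β] (a b : β) (H : SubG β) : SubG β where
  verts := mergeMap a b '' H.verts
  Adj x y := x ≠ y ∧ ∃ x' y', H.Adj x' y' ∧ x = mergeMap a b x' ∧ y = mergeMap a b y'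
  adj_sub := by
    rintro x y ⟨h, -⟩
    exact h
  edge_vert := by
    rintro x y ⟨h, x', y', hadj, rfl, rfl⟩
    exact ⟨x', H.edge_vert hadj, rfl⟩
  symm := by
    constructor
    rintro x y ⟨h, x', y', hadj, rfl, rfl⟩
    exact ⟨h.symm, y', x', hadj.symm, rfl, rfl⟩

/-- Delete from `H` the vertex `x` and all edges at `x` (used for tail removal). -/
def delTail (x : β) (H : SubG β) : SubG β where
  verts := H.verts \ {x}
  Adj u w := H.Adj u w ∧ u ≠ x ∧ w ≠ x
  adj_sub := fun h => H.adj_sub h.1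
  edge_vert := by
    rintro u w ⟨h, hu, hw⟩
    exact ⟨H.edge_vert h, by simpa using hu⟩
  symm := by
    constructor
    rintro u w ⟨h, hu, hw⟩
    exact ⟨h.symm, hw, hu⟩

/-- A pair `⟨tree, family of paths⟩`. -/
structure Rep (β V : Type) where
  T : SubG β
  P : V → SubG β

/-- Well-formedness: the tree is a tree and each member of the family is a path of it. -/
def Rep.WF (R : Rep β V) : Prop :=
  R.T.coe.IsTree ∧ (∀ v, R.P v ≤ R.T) ∧ ∀ v, IsPathSub (R.P v)

/-- `R` is a representation of the pair `(G, G')`. -/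
def Rep.IsRepOf (R : Rep β V) (G G' : SimpleGraph V) : Prop := IsRep R.T R.P G G'

/-- A single minifying operation: contraction of a tree edge, or removal of a tail of
one of the paths. -/
inductive MinifyStep [DecidableEq β] [DecidableEq V] : Rep β V → Rep β V → Prop
  | contract (R : Rep β V) (a b : β) (hab : R.T.Adj a b)
      (hkeep : ∀ v, (cImage a b (R.P v)).edgeSet.Nonempty) :
      MinifyStep R ⟨cImage a b R.T, fun v => cImage a b (R.P v)⟩
  | tail (R : Rep β V) (v₀ : V) (x y : β) (hxy : (R.P v₀).Adj x y)
      (hdeg : ((R.P v₀).neighborSet x).ncard = 1)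
      (htwo : 2 ≤ (R.P v₀).edgeSet.ncard) :
      MinifyStep R ⟨R.T, Function.update R.P v₀ (delTail x (R.P v₀))⟩

/-- A minimal representation of `(G, G')`: no single minifying operation yields again a
representation of `(G, G')`. -/
def IsMinimalRep [DecidableEq β] [DecidableEq V] (T : SubG β) (Ps : V → SubG β)
    (G G' : SimpleGraph V) : Prop :=
  IsRep T Ps G G' ∧ ∀ R' : Rep β V, MinifyStep ⟨T, Ps⟩ R' → ¬ R'.IsRepOf G G'

/-- The cycle on `ZMod n`, vertices labeled in cyclic order. -/
def cycleG (n : ℕ) : SimpleGraph (ZMod n) :=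
  SimpleGraph.fromRel (fun i j => j = i + 1)

/-- Property (P2) of a pair: no four vertices inducing a `K4` in `G` and a `P4` in `G'`. -/
def NoK4P4 (G G' : SimpleGraph V) : Prop :=
  ¬ ∃ a b c d : V,
    G.Adj a b ∧ G.Adj a c ∧ G.Adj a d ∧ G.Adj b c ∧ G.Adj b d ∧ G.Adj c d ∧
    G'.Adj a b ∧ G'.Adj b c ∧ G'.Adj c d ∧ ¬G'.Adj a c ∧ ¬G'.Adj a d ∧ ¬G'.Adj b d

/-- The contraction `G/e` of the edge `e = {p,q}`, merging `q` into `p`,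
realized on the vertex set `V ∖ {q}`. -/
def contrG [DecidableEq V] (G : SimpleGraph V) (p q : V) : SimpleGraph {x : V // x ≠ q} where
  Adj a b := a ≠ b ∧ ∃ x y : V, G.Adj x y ∧ (a : V) = mergeMap p q x ∧ (b : V) = mergeMap p q y
  symm := by
    constructor
    rintro a b ⟨h, x, y, hxy, hx, hy⟩
    exact ⟨h.symm, y, x, hxy.symm, hy, hx⟩
  loopless := by constructor; rintro a ⟨h, -⟩; exact h rfl

/-- The contractibility condition for the edge `{p,q}` in the pair `(G,G')`:
no edge of `G'` sharing exactly one endpoint with `{p,q}` closes a triangle of `G`. -/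
def ContractibleCond (G G' : SimpleGraph V) (p q : V) : Prop :=
  ∀ r : V, (G'.Adj p r → r ≠ q → ¬ G.Adj q r) ∧ (G'.Adj q r → r ≠ p → ¬ G.Adj p r)

/-- `{p,q}` is a contractible edge of the pair `(G,G')`. -/
def ContractibleEdge (G G' : SimpleGraph V) (p q : V) : Prop :=
  G'.Adj p q ∧ ContractibleCond G G' p q

/-- `core` is a path between the two (distinct) endpoints `u` and `v`. -/
def IsPathBetween (core : SubG β) (u v : β) : Prop :=
  IsPathSub core ∧ u ∈ core.verts ∧ v ∈ core.verts ∧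
    ∀ w ∈ core.verts, ((core.neighborSet w).ncard = 1 ↔ (w = u ∨ w = v))

/-- Delete a set of edges from a subgraph (keeping the vertices). -/
def delEdgesSub (H : SubG β) (s : Set (Sym2 β)) : SubG β where
  verts := H.verts
  Adj x y := H.Adj x y ∧ s(x, y) ∉ s
  adj_sub := fun h => H.adj_sub h.1
  edge_vert := fun h => H.edge_vert h.1
  symm := by
    constructor
    rintro x y ⟨h, hs⟩
    refine ⟨h.symm, ?_⟩
    rwa [Sym2.eq_swap]

/-- The join of two graphs. -/
def joinG (H : SimpleGraph W) (K : SimpleGraph U) : SimpleGraph (W ⊕ U) where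
  Adj x y :=
    match x, y with
    | Sum.inl a, Sum.inl b => H.Adj a b
    | Sum.inr a, Sum.inr b => K.Adj a b
    | Sum.inl _, Sum.inr _ => True
    | Sum.inr _, Sum.inl _ => True
  symm := by
    constructor
    rintro (a | a) (b | b) h
    · exact h.symm
    · trivial
    · trivial
    · exact h.symm
  loopless := by
    constructor
    rintro (a | a) h
    · exact H.irrefl h
    · exact K.irrefl h

/-- The component graph `comp(G,C,K)`: vertices are the connected components of the
subgraph of `G` induced on the complement of `K`, two components being adjacent iff some
vertex of `K` is adjacent in `C` to both of them. -/
def compGraph (G C : SimpleGraph V) (K : Set V) :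
    SimpleGraph (SimpleGraph.induce (Kᶜ : Set V) G).ConnectedComponent where
  Adj A B := A ≠ B ∧ ∃ v ∈ K, ∃ a b : (Kᶜ : Set V),
    C.Adj v (a : V) ∧ C.Adj v (b : V) ∧
    (SimpleGraph.induce (Kᶜ : Set V) G).connectedComponentMk a = A ∧
    (SimpleGraph.induce (Kᶜ : Set V) G).connectedComponentMk b = B
  symm := by
    constructor
    rintro A B ⟨h, v, hv, a, b, h1, h2, h3, h4⟩
    exact ⟨h.symm, v, hv, b, a, h2, h1, h4, h3⟩
  loopless := by constructor; rintro A ⟨h, -⟩; exact h rfl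

/-- The map merging both endpoints of an edge into the smaller one. -/
def minMerge [LinearOrder V] (a b : V) : V → V :=
  fun x => if x = a ∨ x = b then min a b else x

/-- Contraction of the edge `{a,b}` of a graph, the merged vertex being named
`min a b` (the other endpoint remains as an isolated vertex). -/
def contrMin [LinearOrder V] (G : SimpleGraph V) (a b : V) : SimpleGraph V where
  Adj x y := x ≠ y ∧ ∃ x' y', G.Adj x' y' ∧ x = minMerge a b x' ∧ y = minMerge a b y'
  symm := by
    constructor
    rintro x y ⟨h, x', y', hxy, hx, hy⟩
    exact ⟨h.symm, y', x', hxy.symm, hy, hx⟩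
  loopless := by constructor; rintro x ⟨h, -⟩; exact h rfl

/-- Simultaneous contraction in a pair of graphs. -/
def stepPair [LinearOrder V] (GG : SimpleGraph V × SimpleGraph V) (e : V × V) :
    SimpleGraph V × SimpleGraph V :=
  (contrMin GG.1 e.1 e.2, contrMin GG.2 e.1 e.2)

/-- Iterated contraction of a list of edges (given by their original names; `f` is the
accumulated merging map). -/
def contractGo [LinearOrder V] (f : V → V) (GG : SimpleGraph V × SimpleGraph V) :
    List (V × V) → SimpleGraph V × SimpleGraph V
  | [] => GG
  | e :: l => contractGo (minMerge (f e.1) (f e.2) ∘ f) (stepPair GG (f e.1, f e.2)) l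

/-- The iterated contraction is defined: at each step the image of the next edge is an
edge of the current second graph and is contractible in the current pair. -/
def DefinedGo [LinearOrder V] (f : V → V) (GG : SimpleGraph V × SimpleGraph V) :
    List (V × V) → Prop
  | [] => True
  | e :: l => (GG.2.Adj (f e.1) (f e.2) ∧ ContractibleCond GG.1 GG.2 (f e.1) (f e.2)) ∧
      DefinedGo (minMerge (f e.1) (f e.2) ∘ f) (stepPair GG (f e.1, f e.2)) l

section StmtFiveAux

/-! Auxiliary machinery for `stmt5`. -/

private lemma lift_walk {T : SubG β} :
    ∀ {u v : β} (w : T.spanningCoe.Walk u v) (hu : u ∈ T.verts) (hv : v ∈ T.verts),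
      ∃ w' : T.coe.Walk ⟨u, hu⟩ ⟨v, hv⟩,
        w'.support.map Subtype.val = w.support ∧
        w'.edges.map (Sym2.map Subtype.val) = w.edges := by
  intro u v w
  induction w with
  | nil => exact fun hu hv => ⟨Walk.nil, by simp, by simp⟩
  | @cons u b v h w ih =>
      intro hu hv
      have h' : T.Adj u b := h
      have hb : b ∈ T.verts := T.edge_vert h'.symm
      obtain ⟨w', hs, he⟩ := ih hb hv
      refine ⟨Walk.cons (show T.coe.Adj ⟨u, hu⟩ ⟨b, hb⟩ from h') w', ?_, ?_⟩
      · simp [Walk.support_cons, hs]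
      · simp [Walk.edges_cons, he]

private lemma spanning_acyclic {T : SubG β} (ht : T.coe.IsTree) :
    T.spanningCoe.IsAcyclic := by
  intro v c hc
  have hnil : c ≠ Walk.nil := hc.ne_nil
  cases c with
  | nil => exact hnil rfl
  | @cons _ b _ h w =>
      have hv : v ∈ T.verts := T.edge_vert (show T.Adj v b from h)
      obtain ⟨c', hs, he⟩ := lift_walk (Walk.cons h w) hv hv
      have hcyc : c'.IsCycle := by
        refine ⟨⟨⟨?_⟩, ?_⟩, ?_⟩
        · have h1 := hc.edges_nodup
          rw [← he] at h1
          exact h1.of_map _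
        · intro hn
          rw [hn] at hs
          simp only [Walk.support_nil, List.map_cons, List.map_nil] at hs
          have h2 : (Walk.cons h w).support = v :: w.support := Walk.support_cons _ _
          rw [h2] at hs
          have := w.support_ne_nil
          simp only [List.cons.injEq] at hs
          exact this hs.2.symm
        · have h1 := hc.support_nodup
          rw [← hs, ← List.map_tail] at h1
          exact h1.of_map _
      exact ht.IsAcyclic c' hcyc

private lemma walk_down {C T : SubG β} (hCT : C ≤ T) :
    ∀ {a b : C.verts} (w : C.coe.Walk a b),
      ∃ w' : T.spanningCoe.Walk a.val b.val, ∀ e ∈ w'.edges, e ∈ C.edgeSet := by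
  intro a b w
  induction w with
  | nil => exact ⟨Walk.nil, by simp⟩
  | @cons a c b h w ih =>
      obtain ⟨w', hw'⟩ := ih
      have hadj : C.Adj a.val c.val := h
      refine ⟨Walk.cons (show T.spanningCoe.Adj a.val c.val from hCT.2 hadj) w', ?_⟩
      intro e hecons
      rw [Walk.edges_cons, List.mem_cons] at hecons
      rcases hecons with rfl | hmem
      · exact hadj
      · exact hw' e hmem

private lemma exists_path_in {C T : SubG β} (hCT : C ≤ T) (hC : C.Connected)
    {u v : β} (hu : u ∈ C.verts) (hv : v ∈ C.verts) :
    ∃ pth : T.spanningCoe.Path u v, ∀ e ∈ pth.1.edges, e ∈ C.edgeSet := by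
  classical
  obtain ⟨w0⟩ := hC ⟨u, hu⟩ ⟨v, hv⟩
  obtain ⟨w1, hw1⟩ := walk_down hCT w0
  exact ⟨⟨w1.bypass, w1.bypass_isPath⟩, fun e he => hw1 e (w1.edges_bypass_subset he)⟩

private lemma switch2 {S : SimpleGraph β} {A B : Set (Sym2 β)}
    (hdisj : ∀ e, e ∈ A → e ∈ B → False) :
    ∀ {u v : β} (ω : S.Walk u v), (∀ e ∈ ω.edges, e ∈ A ∨ e ∈ B) →
      (∃ e ∈ ω.edges, e ∈ B) → (∃ a₀, s(u, a₀) ∈ A) →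
      ∃ c c1 c2, s(c, c1) ∈ A ∧ s(c, c2) ∈ B ∧ s(c, c1) ≠ s(c, c2) := by
  intro u v ω
  induction ω with
  | nil => intro _ hB _; simp only [Walk.edges_nil, List.not_mem_nil] at hB; tauto
  | @cons u b v h ω ih =>
      intro hAB hB hu
      by_cases hg : s(u, b) ∈ B
      · obtain ⟨a₀, ha₀⟩ := hu
        exact ⟨u, a₀, b, ha₀, hg, fun heq => hdisj _ ha₀ (heq ▸ hg)⟩
      · obtain ⟨e, heω, heB⟩ := hB
        have heω' : e ∈ ω.edges := by
          rw [Walk.edges_cons, List.mem_cons] at heω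
          rcases heω with rfl | h'
          · exact absurd heB hg
          · exact h'
        refine ih (fun e he => hAB e ?_) ⟨e, heω', heB⟩ ⟨u, ?_⟩
        · rw [Walk.edges_cons]; exact List.mem_cons_of_mem _ he
        · have hg' : s(u, b) ∈ A := by
            rcases hAB (s(u, b)) (by rw [Walk.edges_cons]; exact List.mem_cons_self) with
              h1 | h1
            · exact h1
            · exact absurd h1 hg
          rwa [Sym2.eq_swap]

private lemma edgeInt_elim {P Q : SubG β} (h : EdgeInt P Q) :
    ∃ a b, P.Adj a b ∧ Q.Adj a b := by
  obtain ⟨e, he1, he2⟩ := h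
  revert he1 he2
  induction e using Sym2.ind with
  | _ a b => exact fun h1 h2 => ⟨a, b, h1, h2⟩

private lemma key {β V : Type} [Fintype β] {T : SubG β} {Ps : V → SubG β}
    {G G' : SimpleGraph V}
    (h : IsRep T Ps G G') {p q x y : V}
    (hpq : G'.Adj p q)
    (hx1 : G.Adj p x) (hx2 : ¬G.Adj q x) (hxq : x ≠ q)
    (hy1 : G.Adj q y) (hy2 : ¬G.Adj p y) (hyp : y ≠ p)
    (hxy : G.Adj x y) : False := by
  classical
  have hacyc : T.spanningCoe.IsAcyclic := spanning_acyclic h.tree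
  have hpq' : NonSplit (Ps p) (Ps q) := by
    have h1 : (ENPTg Ps).Adj p q := by rw [h.enpt]; exact hpq
    exact (show p ≠ q ∧ NonSplit (Ps p) (Ps q) from h1).2
  have hXP : EdgeInt (Ps x) (Ps p) := by
    have h1 : (EPTg Ps).Adj p x := by rw [h.ept]; exact hx1
    exact (show p ≠ x ∧ EdgeInt (Ps p) (Ps x) from h1).2.symm
  have hYQ : EdgeInt (Ps y) (Ps q) := by
    have h1 : (EPTg Ps).Adj q y := by rw [h.ept]; exact hy1
    exact (show q ≠ y ∧ EdgeInt (Ps q) (Ps y) from h1).2.symm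
  have hXY : EdgeInt (Ps x) (Ps y) := by
    have h1 : (EPTg Ps).Adj x y := by rw [h.ept]; exact hxy
    exact (show x ≠ y ∧ EdgeInt (Ps x) (Ps y) from h1).2
  have hXQ : ∀ e, e ∈ (Ps x).edgeSet → e ∈ (Ps q).edgeSet → False := by
    intro e he1 he2
    refine hx2 ?_
    rw [← h.ept]
    exact show q ≠ x ∧ EdgeInt (Ps q) (Ps x) from ⟨Ne.symm hxq, ⟨e, he2, he1⟩⟩
  have hYP : ∀ e, e ∈ (Ps y).edgeSet → e ∈ (Ps p).edgeSet → False := by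
    intro e he1 he2
    refine hy2 ?_
    rw [← h.ept]
    exact show p ≠ y ∧ EdgeInt (Ps p) (Ps y) from ⟨Ne.symm hyp, ⟨e, he2, he1⟩⟩
  obtain ⟨u1, u2, hu12X, hu12P⟩ := edgeInt_elim hXP
  obtain ⟨v1, v2, hv12Y, hv12Q⟩ := edgeInt_elim hYQ
  obtain ⟨z1, z2, hz12P, hz12Q⟩ := edgeInt_elim hpq'.1
  obtain ⟨t1, t2, ht12X, ht12Y⟩ := edgeInt_elim hXY
  have hRconn : (Ps p ⊔ Ps q).Connected :=
    Subgraph.connected_sup (h.path p).1.preconnected (h.path q).1.preconnected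
      ⟨z1, by rw [Subgraph.verts_inf]; exact ⟨hz12P.fst_mem, hz12Q.fst_mem⟩⟩
  have hZconn : (Ps x ⊔ Ps y).Connected :=
    Subgraph.connected_sup (h.path x).1.preconnected (h.path y).1.preconnected
      ⟨t1, by rw [Subgraph.verts_inf]; exact ⟨ht12X.fst_mem, ht12Y.fst_mem⟩⟩
  have hRT : Ps p ⊔ Ps q ≤ T := sup_le (h.sub p) (h.sub q)
  have hZT : Ps x ⊔ Ps y ≤ T := sup_le (h.sub x) (h.sub y)
  have hu1Z : u1 ∈ (Ps x ⊔ Ps y).verts := by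
    rw [Subgraph.verts_sup]; exact Or.inl hu12X.fst_mem
  have hv1Z : v1 ∈ (Ps x ⊔ Ps y).verts := by
    rw [Subgraph.verts_sup]; exact Or.inr hv12Y.fst_mem
  have hu1R : u1 ∈ (Ps p ⊔ Ps q).verts := by
    rw [Subgraph.verts_sup]; exact Or.inl hu12P.fst_mem
  have hv1R : v1 ∈ (Ps p ⊔ Ps q).verts := by
    rw [Subgraph.verts_sup]; exact Or.inr hv12Q.fst_mem
  obtain ⟨π1, hπ1⟩ := exists_path_in hZT hZconn hu1Z hv1Z
  obtain ⟨π2, hπ2⟩ := exists_path_in hRT hRconn hu1R hv1R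
  have hππ : π1 = π2 := hacyc.path_unique π1 π2
  have hclass : ∀ e ∈ π1.1.edges,
      e ∈ (Ps x).edgeSet ∩ (Ps p).edgeSet ∨ e ∈ (Ps y).edgeSet ∩ (Ps q).edgeSet := by
    intro e he
    have heZ : e ∈ (Ps x ⊔ Ps y).edgeSet := hπ1 e he
    have heR : e ∈ (Ps p ⊔ Ps q).edgeSet := hπ2 e (by rw [← hππ]; exact he)
    rw [Subgraph.edgeSet_sup] at heZ heR
    rcases heZ with hx' | hy' <;> rcases heR with hp' | hq'
    · exact Or.inl ⟨hx', hp'⟩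
    · exact absurd hq' (fun hh => hXQ e hx' hh)
    · exact absurd hp' (fun hh => hYP e hy' hh)
    · exact Or.inr ⟨hy', hq'⟩
  have hadj12 : T.spanningCoe.Adj v1 v2 := (h.sub q).2 hv12Q
  have hωAB : ∀ e ∈ (π1.1.append (Walk.cons hadj12 Walk.nil)).edges,
      e ∈ (Ps x).edgeSet ∩ (Ps p).edgeSet ∨ e ∈ (Ps y).edgeSet ∩ (Ps q).edgeSet := by
    intro e he
    rw [Walk.edges_append, List.mem_append] at he
    rcases he with he | he
    · exact hclass e he
    · simp only [Walk.edges_cons, Walk.edges_nil, List.mem_singleton] at he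
      subst he
      exact Or.inr ⟨hv12Y, hv12Q⟩
  have hωB : ∃ e ∈ (π1.1.append (Walk.cons hadj12 Walk.nil)).edges,
      e ∈ (Ps y).edgeSet ∩ (Ps q).edgeSet := by
    refine ⟨s(v1, v2), ?_, ⟨hv12Y, hv12Q⟩⟩
    rw [Walk.edges_append, List.mem_append]
    right
    simp
  obtain ⟨w, c1, c2, hfA, hf'B, hfne⟩ :=
    switch2 (fun e hA hB => hXQ e hA.1 hB.2) (π1.1.append (Walk.cons hadj12 Walk.nil))
      hωAB hωB ⟨u2, ⟨hu12X, hu12P⟩⟩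
  have hfX : (Ps x).Adj w c1 := hfA.1
  have hfP : (Ps p).Adj w c1 := hfA.2
  have hf'Y : (Ps y).Adj w c2 := hf'B.1
  have hf'Q : (Ps q).Adj w c2 := hf'B.2
  have hfnotQ : ¬(Ps q).Adj w c1 :=
    fun hh => hXQ s(w, c1) hfA.1 (Subgraph.mem_edgeSet.mpr hh)
  have hf'notP : ¬(Ps p).Adj w c2 :=
    fun hh => hYP s(w, c2) hf'B.1 (Subgraph.mem_edgeSet.mpr hh)
  have hc12 : c1 ≠ c2 := fun hh => hfne (by rw [hh])
  have hnb : ∀ z, (Ps p ⊔ Ps q).Adj w z → z = c1 ∨ z = c2 := by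
    intro z hz
    by_contra hcon
    push_neg at hcon
    have hwsplit : w ∉ Split (Ps p) (Ps q) := by
      rw [hpq'.2]; exact Set.notMem_empty w
    apply hwsplit
    show 3 ≤ (((Ps p ⊔ Ps q)).neighborSet w).ncard
    have hsub : ({c1, c2, z} : Set β) ⊆ (Ps p ⊔ Ps q).neighborSet w := by
      intro t ht
      simp only [Set.mem_insert_iff, Set.mem_singleton_iff] at ht
      rcases ht with rfl | rfl | rfl
      · exact Subgraph.sup_adj.mpr (Or.inl hfP)
      · exact Subgraph.sup_adj.mpr (Or.inr hf'Q)
      · exact hz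
    have h3 : ({c1, c2, z} : Set β).ncard = 3 :=
      Set.ncard_eq_three.mpr ⟨c1, c2, z, hc12, Ne.symm hcon.1, Ne.symm hcon.2, rfl⟩
    calc (3 : ℕ) = ({c1, c2, z} : Set β).ncard := h3.symm
      _ ≤ _ := Set.ncard_le_ncard hsub (Set.toFinite _)
  have hwz1 : w ≠ z1 := by
    intro hh
    subst hh
    have hadj : (Ps p ⊔ Ps q).Adj w z2 := Subgraph.sup_adj.mpr (Or.inl hz12P)
    rcases hnb z2 hadj with rfl | rfl
    · exact hfnotQ hz12Q
    · exact hf'notP hz12P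
  obtain ⟨α, hα⟩ := exists_path_in (h.sub p) (h.path p).1 hfP.fst_mem hz12P.fst_mem
  obtain ⟨βp, hβ⟩ := exists_path_in (h.sub q) (h.path q).1 hf'Q.fst_mem hz12Q.fst_mem
  have hαβ : α = βp := hacyc.path_unique α βp
  have hβ2 : ∀ e ∈ α.1.edges, e ∈ (Ps q).edgeSet := by rw [hαβ]; exact hβ
  obtain ⟨W, hWp⟩ := α
  cases W with
  | nil => exact hwz1 rfl
  | @cons _ b' _ hadj W' =>
      have hmem : s(w, b') ∈ (Walk.cons hadj W').edges := by
        rw [Walk.edges_cons]; exact List.mem_cons_self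
      have hP' : (Ps p).Adj w b' := hα _ hmem
      have hQ' : (Ps q).Adj w b' := hβ2 _ hmem
      have hadjR : (Ps p ⊔ Ps q).Adj w b' := Subgraph.sup_adj.mpr (Or.inl hP')
      rcases hnb _ hadjR with rfl | rfl
      · exact hfnotQ hQ'
      · exact hf'notP hP'

private lemma contr_adj {V : Type} [DecidableEq V] {G : SimpleGraph V} {p q : V}
    {a b : {x : V // x ≠ q}} :
    (contrG G p q).Adj a b ↔ (a : V) ≠ b ∧
      (G.Adj a b ∨ ((a : V) = p ∧ G.Adj q b) ∨ ((b : V) = p ∧ G.Adj a q)) := by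
  constructor
  · rintro ⟨hne, x, y, hxy, hax, hby⟩
    refine ⟨fun hh => hne (Subtype.ext hh), ?_⟩
    by_cases hx : x = q <;> by_cases hy : y = q
    · rw [hx, hy] at hxy; exact absurd hxy (G.irrefl)
    · simp only [mergeMap, if_pos hx] at hax
      simp only [mergeMap, if_neg hy] at hby
      rw [hx] at hxy
      exact Or.inr (Or.inl ⟨hax, by rw [hby]; exact hxy⟩)
    · simp only [mergeMap, if_neg hx] at hax
      simp only [mergeMap, if_pos hy] at hby
      rw [hy] at hxy
      exact Or.inr (Or.inr ⟨hby, by rw [hax]; exact hxy⟩)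
    · simp only [mergeMap, if_neg hx] at hax
      simp only [mergeMap, if_neg hy] at hby
      exact Or.inl (by rw [hax, hby]; exact hxy)
  · rintro ⟨hne, hcase⟩
    refine ⟨fun hh => hne (by rw [hh]), ?_⟩
    rcases hcase with hadj | ⟨hap, hadj⟩ | ⟨hbp, hadj⟩
    · exact ⟨a, b, hadj, by simp only [mergeMap, if_neg a.2], by simp only [mergeMap, if_neg b.2]⟩
    · exact ⟨q, b, hadj, by simp only [mergeMap, if_pos rfl]; exact hap,
        by simp only [mergeMap, if_neg b.2]⟩
    · exact ⟨a, q, hadj, by simp only [mergeMap, if_neg a.2],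
        by simp only [mergeMap, if_pos rfl]; exact hbp⟩

section Decode

variable {V : Type} {G : SimpleGraph V} {A B p q : V}

private lemma decode_pos1 (hA : A = p) (hB : B ≠ p)
    (h : G.Adj A B ∨ (A = p ∧ G.Adj q B) ∨ (B = p ∧ G.Adj A q)) :
    G.Adj p B ∨ G.Adj q B := by
  subst hA
  rcases h with h | ⟨_, h⟩ | ⟨h, _⟩
  · exact Or.inl h
  · exact Or.inr h
  · exact absurd h hB

private lemma decode_pos2 (hB : B = p) (hA : A ≠ p)
    (h : G.Adj A B ∨ (A = p ∧ G.Adj q B) ∨ (B = p ∧ G.Adj A q)) :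
    G.Adj p A ∨ G.Adj q A := by
  subst hB
  rcases h with h | ⟨h, _⟩ | ⟨_, h⟩
  · exact Or.inl h.symm
  · exact absurd h hA
  · exact Or.inr h.symm

private lemma decode_none (hA : A ≠ p) (hB : B ≠ p)
    (h : G.Adj A B ∨ (A = p ∧ G.Adj q B) ∨ (B = p ∧ G.Adj A q)) : G.Adj A B := by
  rcases h with h | ⟨h, _⟩ | ⟨h, _⟩
  · exact h
  · exact absurd h hA
  · exact absurd h hB

private lemma ndecode_pos1 (hA : A = p) (hAB : A ≠ B)
    (n : ¬(A ≠ B ∧ (G.Adj A B ∨ (A = p ∧ G.Adj q B) ∨ (B = p ∧ G.Adj A q)))) :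
    ¬G.Adj p B ∧ ¬G.Adj q B := by
  subst hA
  exact ⟨fun hh => n ⟨hAB, Or.inl hh⟩, fun hh => n ⟨hAB, Or.inr (Or.inl ⟨rfl, hh⟩)⟩⟩

private lemma ndecode_pos2 (hB : B = p) (hAB : A ≠ B)
    (n : ¬(A ≠ B ∧ (G.Adj A B ∨ (A = p ∧ G.Adj q B) ∨ (B = p ∧ G.Adj A q)))) :
    ¬G.Adj p A ∧ ¬G.Adj q A := by
  subst hB
  exact ⟨fun hh => n ⟨hAB, Or.inl hh.symm⟩, fun hh => n ⟨hAB, Or.inr (Or.inr ⟨rfl, hh.symm⟩)⟩⟩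

private lemma ndecode_none (hAB : A ≠ B)
    (n : ¬(A ≠ B ∧ (G.Adj A B ∨ (A = p ∧ G.Adj q B) ∨ (B = p ∧ G.Adj A q)))) :
    ¬G.Adj A B := fun hh => n ⟨hAB, Or.inl hh⟩

end Decode

private lemma caseEnd {β V : Type} [Fintype β] {T : SubG β} {Ps : V → SubG β}
    {G G' : SimpleGraph V}
    (hR : IsRep T Ps G G') (hP2 : NoK4P4 G G')
    {p q b c d : V} (hcon : ContractibleEdge G G' p q)
    (hbq : b ≠ q) (hbp : b ≠ p) (hcq : c ≠ q) (hcp : c ≠ p) (hdq : d ≠ q) (hdp : d ≠ p)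
    (gb : G.Adj p b ∨ G.Adj q b) (gc : G.Adj p c ∨ G.Adj q c) (gd : G.Adj p d ∨ G.Adj q d)
    (gbc : G.Adj b c) (gbd : G.Adj b d) (gcd : G.Adj c d)
    (g'b : G'.Adj p b ∨ G'.Adj q b) (g'bc : G'.Adj b c) (g'cd : G'.Adj c d)
    (npc : ¬G'.Adj p c) (nqc : ¬G'.Adj q c) (npd : ¬G'.Adj p d) (nqd : ¬G'.Adj q d)
    (nbd : ¬G'.Adj b d) : False := by
  obtain ⟨hpq, hcc⟩ := hcon
  rcases g'b with hb' | hb'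
  · have hqb : ¬G.Adj q b := (hcc b).1 hb' hbq
    have hpb : G.Adj p b := gb.resolve_right hqb
    by_cases hpc : G.Adj p c
    · by_cases hpd : G.Adj p d
      · exact hP2 ⟨p, b, c, d, hpb, hpc, hpd, gbc, gbd, gcd, hb', g'bc, g'cd, npc, npd, nbd⟩
      · exact key hR hpq hpb hqb hbq (gd.resolve_left hpd) hpd hdp gbd
    · exact key hR hpq hpb hqb hbq (gc.resolve_left hpc) hpc hcp gbc
  · have hpb : ¬G.Adj p b := (hcc b).2 hb' hbp
    have hqb : G.Adj q b := gb.resolve_left hpb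
    by_cases hqc : G.Adj q c
    · by_cases hqd : G.Adj q d
      · exact hP2 ⟨q, b, c, d, hqb, hqc, hqd, gbc, gbd, gcd, hb', g'bc, g'cd, nqc, nqd, nbd⟩
      · exact key hR hpq.symm hqb hpb hbp (gd.resolve_right hqd) hqd hdq gbd
    · exact key hR hpq.symm hqb hpb hbp (gc.resolve_right hqc) hqc hcq gbc

private lemma caseMid {β V : Type} [Fintype β] {T : SubG β} {Ps : V → SubG β}
    {G G' : SimpleGraph V}
    (hR : IsRep T Ps G G') (hP2 : NoK4P4 G G')
    {p q a c d : V} (hcon : ContractibleEdge G G' p q)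
    (haq : a ≠ q) (hap : a ≠ p) (hcq : c ≠ q) (hcp : c ≠ p) (hdq : d ≠ q) (hdp : d ≠ p)
    (ga : G.Adj p a ∨ G.Adj q a) (gc : G.Adj p c ∨ G.Adj q c) (gd : G.Adj p d ∨ G.Adj q d)
    (gac : G.Adj a c) (gad : G.Adj a d) (gcd : G.Adj c d)
    (g'a : G'.Adj p a ∨ G'.Adj q a) (g'c : G'.Adj p c ∨ G'.Adj q c) (g'cd : G'.Adj c d)
    (nac : ¬G'.Adj a c) (nad : ¬G'.Adj a d) (npd : ¬G'.Adj p d) (nqd : ¬G'.Adj q d) :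
    False := by
  obtain ⟨hpq, hcc⟩ := hcon
  rcases g'a with ha' | ha' <;> rcases g'c with hc' | hc'
  · have hqa : ¬G.Adj q a := (hcc a).1 ha' haq
    have hpa : G.Adj p a := ga.resolve_right hqa
    have hqc : ¬G.Adj q c := (hcc c).1 hc' hcq
    have hpc : G.Adj p c := gc.resolve_right hqc
    by_cases hpd : G.Adj p d
    · exact hP2 ⟨a, p, c, d, hpa.symm, gac, gad, hpc, hpd, gcd, ha'.symm, hc', g'cd,
        nac, nad, npd⟩
    · exact key hR hpq hpa hqa haq (gd.resolve_left hpd) hpd hdp gad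
  · have hqa : ¬G.Adj q a := (hcc a).1 ha' haq
    have hpa : G.Adj p a := ga.resolve_right hqa
    have hpc : ¬G.Adj p c := (hcc c).2 hc' hcp
    have hqc : G.Adj q c := gc.resolve_left hpc
    exact key hR hpq hpa hqa haq hqc hpc hcp gac
  · have hpa : ¬G.Adj p a := (hcc a).2 ha' hap
    have hqa : G.Adj q a := ga.resolve_left hpa
    have hqc : ¬G.Adj q c := (hcc c).1 hc' hcq
    have hpc : G.Adj p c := gc.resolve_right hqc
    exact key hR hpq hpc hqc hcq hqa hpa hap gac.symm
  · have hpa : ¬G.Adj p a := (hcc a).2 ha' hap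
    have hqa : G.Adj q a := ga.resolve_left hpa
    have hpc : ¬G.Adj p c := (hcc c).2 hc' hcp
    have hqc : G.Adj q c := gc.resolve_left hpc
    by_cases hqd : G.Adj q d
    · exact hP2 ⟨a, q, c, d, hqa.symm, gac, gad, hqc, hqd, gcd, ha'.symm, hc', g'cd,
        nac, nad, nqd⟩
    · exact key hR hpq.symm hqa hpa hap (gd.resolve_right hqd) hqd hdq gad

end StmtFiveAux

/-- contraction preserves property (P2). -/
theorem stmt5 {V : Type} [Fintype V] [DecidableEq V]
    (G G' : SimpleGraph V) (hle : G' ≤ G)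
    (hrep : ∃ (β : Type) (_ : Fintype β) (T : SubG β) (Ps : V → SubG β), IsRep T Ps G G')
    (hP2 : NoK4P4 G G')
    (p q : V) (hcon : ContractibleEdge G G' p q) :
    NoK4P4 (contrG G p q) (contrG G' p q) := by
  classical
  obtain ⟨β, hfin, T, Ps, hR⟩ := hrep
  haveI := hfin
  rintro ⟨a, b, c, d, k1, k2, k3, k4, k5, k6, e1, e2, e3, n1, n2, n3⟩
  rw [contr_adj] at k1 k2 k3 k4 k5 k6 e1 e2 e3 n1 n2 n3
  obtain ⟨hab, k1⟩ := k1
  obtain ⟨hac, k2⟩ := k2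
  obtain ⟨had, k3⟩ := k3
  obtain ⟨hbc, k4⟩ := k4
  obtain ⟨hbd, k5⟩ := k5
  obtain ⟨hcd, k6⟩ := k6
  obtain ⟨-, e1⟩ := e1
  obtain ⟨-, e2⟩ := e2
  obtain ⟨-, e3⟩ := e3
  by_cases hA : (a : V) = p
  · have hBp : (b : V) ≠ p := fun hh => hab (hA.trans hh.symm)
    have hCp : (c : V) ≠ p := fun hh => hac (hA.trans hh.symm)
    have hDp : (d : V) ≠ p := fun hh => had (hA.trans hh.symm)
    exact caseEnd hR hP2 hcon b.2 hBp c.2 hCp d.2 hDp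
      (decode_pos1 hA hBp k1) (decode_pos1 hA hCp k2) (decode_pos1 hA hDp k3)
      (decode_none hBp hCp k4) (decode_none hBp hDp k5) (decode_none hCp hDp k6)
      (decode_pos1 hA hBp e1) (decode_none hBp hCp e2) (decode_none hCp hDp e3)
      (ndecode_pos1 hA hac n1).1 (ndecode_pos1 hA hac n1).2
      (ndecode_pos1 hA had n2).1 (ndecode_pos1 hA had n2).2
      (ndecode_none hbd n3)
  by_cases hB : (b : V) = p
  · have hAp : (a : V) ≠ p := fun hh => hab (hh.trans hB.symm)
    have hCp : (c : V) ≠ p := fun hh => hbc (hB.trans hh.symm)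
    have hDp : (d : V) ≠ p := fun hh => hbd (hB.trans hh.symm)
    exact caseMid hR hP2 hcon a.2 hAp c.2 hCp d.2 hDp
      (decode_pos2 hB hAp k1) (decode_pos1 hB hCp k4) (decode_pos1 hB hDp k5)
      (decode_none hAp hCp k2) (decode_none hAp hDp k3) (decode_none hCp hDp k6)
      (decode_pos2 hB hAp e1) (decode_pos1 hB hCp e2) (decode_none hCp hDp e3)
      (ndecode_none hac n1) (ndecode_none had n2)
      (ndecode_pos1 hB hbd n3).1 (ndecode_pos1 hB hbd n3).2
  by_cases hC : (c : V) = p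
  · have hAp : (a : V) ≠ p := fun hh => hac (hh.trans hC.symm)
    have hBp : (b : V) ≠ p := fun hh => hbc (hh.trans hC.symm)
    have hDp : (d : V) ≠ p := fun hh => hcd (hC.trans hh.symm)
    exact caseMid hR hP2 hcon d.2 hDp b.2 hBp a.2 hAp
      (decode_pos1 hC hDp k6) (decode_pos2 hC hBp k4) (decode_pos2 hC hAp k2)
      ((decode_none hBp hDp k5).symm) ((decode_none hAp hDp k3).symm)
      ((decode_none hAp hBp k1).symm)
      (decode_pos1 hC hDp e3) (decode_pos2 hC hBp e2) ((decode_none hAp hBp e1).symm)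
      (fun hh => (ndecode_none hbd n3) hh.symm) (fun hh => (ndecode_none had n2) hh.symm)
      (ndecode_pos2 hC hac n1).1 (ndecode_pos2 hC hac n1).2
  by_cases hD : (d : V) = p
  · have hAp : (a : V) ≠ p := fun hh => had (hh.trans hD.symm)
    have hBp : (b : V) ≠ p := fun hh => hbd (hh.trans hD.symm)
    have hCp : (c : V) ≠ p := fun hh => hcd (hh.trans hD.symm)
    exact caseEnd hR hP2 hcon c.2 hCp b.2 hBp a.2 hAp
      (decode_pos2 hD hCp k6) (decode_pos2 hD hBp k5) (decode_pos2 hD hAp k3)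
      ((decode_none hBp hCp k4).symm) ((decode_none hAp hCp k2).symm)
      ((decode_none hAp hBp k1).symm)
      (decode_pos2 hD hCp e3) ((decode_none hBp hCp e2).symm) ((decode_none hAp hBp e1).symm)
      (ndecode_pos2 hD hbd n3).1 (ndecode_pos2 hD hbd n3).2
      (ndecode_pos2 hD had n2).1 (ndecode_pos2 hD had n2).2
      (fun hh => (ndecode_none hac n1) hh.symm)
  · exact hP2 ⟨a, b, c, d,
      decode_none hA hB k1, decode_none hA hC k2, decode_none hA hD k3,
      decode_none hB hC k4, decode_none hB hD k5, decode_none hC hD k6,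
      decode_none hA hB e1, decode_none hB hC e2, decode_none hC hD e3,
      ndecode_none hac n1, ndecode_none had n2, ndecode_none hbd n3⟩


end ENPT
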